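/- Let X be an n-dimensional p-Banach space (0 < p ≤ 1) and I : X → X the identity map. Then for every k ∈ ℕ, the k-th dyadic entropy number satisfies 2^{(1-k)/n} ≤ e_k(I) ≤ 4^{1/p} · 2^{(1-k)/n}. -/

import Mathlib

open Real
open MeasureTheory Pointwise


-- Step 1+2: upper bound on N via Euclidean norm
lemma pnorm_sum_le (p : ℝ) (hp0 : 0 < p) {E : Type*} [AddCommGroup E]
    (N : E → ℝ) (hzero : N 0 = 0)
    (hptri : ∀ x y, N (x + y) ^ p ≤ N x ^ p + N y ^ p)
    {ι : Type*} (s : Finset ι) (f : ι → E) :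
    N (∑ i ∈ s, f i) ^ p ≤ ∑ i ∈ s, N (f i) ^ p := by
  induction s using Finset.cons_induction with
  | empty => simp [hzero, Real.zero_rpow hp0.ne']
  | cons a s ha ih =>
      rw [Finset.sum_cons, Finset.sum_cons]
      exact (hptri _ _).trans (by linarith)

lemma pnorm_upper (p : ℝ) (hp0 : 0 < p) (n : ℕ)
    (N : EuclideanSpace ℝ (Fin n) → ℝ)
    (hnonneg : ∀ x, 0 ≤ N x) (hzero : N 0 = 0)
    (hsmul : ∀ (c : ℝ) x, N (c • x) = |c| * N x)
    (hptri : ∀ x y, N (x + y) ^ p ≤ N x ^ p + N y ^ p) :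
    ∃ K : ℝ, 0 < K ∧ ∀ x, N x ^ p ≤ K * ‖x‖ ^ p := by
  set K := (∑ i, N (EuclideanSpace.single i (1:ℝ)) ^ p) + 1 with hKdef
  have hsum_nonneg : 0 ≤ ∑ i, N (EuclideanSpace.single i (1:ℝ)) ^ p :=
    Finset.sum_nonneg fun i _ => Real.rpow_nonneg (hnonneg _) _
  refine ⟨K, by positivity, fun x => ?_⟩
  have hx : x = ∑ i, EuclideanSpace.single i (x i) := by
    ext i
    rw [show (∑ i, EuclideanSpace.single i (x i)).ofLp = ∑ i, (EuclideanSpace.single i (x i)).ofLp from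
      map_sum (WithLp.linearEquiv 2 ℝ (Fin n → ℝ)) _ _, Finset.sum_apply]
    simp [EuclideanSpace.single_apply]
  have habs : ∀ i, |x i| ≤ ‖x‖ := by
    intro i
    rw [EuclideanSpace.norm_eq, ← Real.sqrt_sq_eq_abs]
    apply Real.sqrt_le_sqrt
    simp only [Real.norm_eq_abs, sq_abs]
    exact Finset.single_le_sum (f := fun j => x j ^ 2) (fun j _ => sq_nonneg _)
      (Finset.mem_univ i)
  calc N x ^ p = N (∑ i, EuclideanSpace.single i (x i)) ^ p := by rw [← hx]
    _ ≤ ∑ i, N (EuclideanSpace.single i (x i)) ^ p :=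
        pnorm_sum_le p hp0 N hzero hptri _ _
    _ ≤ ∑ i, ‖x‖ ^ p * N (EuclideanSpace.single i (1:ℝ)) ^ p := by
        apply Finset.sum_le_sum
        intro i _
        have h1 : EuclideanSpace.single i (x i) = (x i) • EuclideanSpace.single i (1:ℝ) := by
          ext j
          by_cases h : j = i <;> simp [EuclideanSpace.single_apply, h]
        rw [h1, hsmul, Real.mul_rpow (abs_nonneg _) (hnonneg _)]
        apply mul_le_mul_of_nonneg_right _ (Real.rpow_nonneg (hnonneg _) _)
        exact Real.rpow_le_rpow (abs_nonneg _) (habs i) hp0.le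
    _ = (∑ i, N (EuclideanSpace.single i (1:ℝ)) ^ p) * ‖x‖ ^ p := by
        rw [Finset.sum_mul]
        exact Finset.sum_congr rfl fun i _ => mul_comm _ _
    _ ≤ K * ‖x‖ ^ p := by
        apply mul_le_mul_of_nonneg_right _ (Real.rpow_nonneg (norm_nonneg _) _)
        simp [hKdef]

lemma pnorm_cont (p : ℝ) (hp0 : 0 < p) (n : ℕ)
    (N : EuclideanSpace ℝ (Fin n) → ℝ)
    (hnonneg : ∀ x, 0 ≤ N x)
    (hneg : ∀ x, N (-x) = N x)
    (hptri : ∀ x y, N (x + y) ^ p ≤ N x ^ p + N y ^ p)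
    (K : ℝ) (hK : 0 < K) (hup : ∀ x, N x ^ p ≤ K * ‖x‖ ^ p) :
    Continuous (fun x => N x ^ p) := by
  rw [Metric.continuous_iff]
  intro x ε hε
  refine ⟨(ε / K) ^ (1/p), Real.rpow_pos_of_pos (div_pos hε hK) _, fun y hy => ?_⟩
  have hsub : ∀ a b : EuclideanSpace ℝ (Fin n), N a ^ p - N b ^ p ≤ N (a - b) ^ p := by
    intro a b
    have h := hptri (a - b) b
    rw [sub_add_cancel] at h
    linarith
  have key : N (y - x) ^ p < ε := by
    have h1 : ‖y - x‖ ^ p < ((ε / K) ^ (1/p)) ^ p := by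
      apply Real.rpow_lt_rpow (norm_nonneg _) _ hp0
      rwa [← dist_eq_norm]
    have h2 : ((ε / K) ^ (1/p)) ^ p = ε / K := by
      rw [one_div]
      exact Real.rpow_inv_rpow (div_pos hε hK).le hp0.ne'
    calc N (y - x) ^ p ≤ K * ‖y - x‖ ^ p := hup _
      _ < K * (ε / K) := by
          rw [← h2]
          exact mul_lt_mul_of_pos_left h1 hK
      _ = ε := by field_simp
  rw [Real.dist_eq, abs_sub_lt_iff]
  constructor
  · exact lt_of_le_of_lt (hsub y x) key
  · refine lt_of_le_of_lt (hsub x y) ?_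
    rw [show x - y = -(y - x) by abel, hneg]
    exact key

lemma pnorm_lower (p : ℝ) (hp0 : 0 < p) (n : ℕ) (hn : 0 < n)
    (N : EuclideanSpace ℝ (Fin n) → ℝ)
    (hnonneg : ∀ x, 0 ≤ N x) (hzero : ∀ x, N x = 0 ↔ x = 0)
    (hsmul : ∀ (c : ℝ) x, N (c • x) = |c| * N x)
    (hcont : Continuous (fun x => N x ^ p)) :
    ∃ c₀ : ℝ, 0 < c₀ ∧ ∀ x, c₀ * ‖x‖ ≤ N x := by
  have hsphere : (Metric.sphere (0 : EuclideanSpace ℝ (Fin n)) 1).Nonempty := by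
    refine ⟨EuclideanSpace.single (⟨0, hn⟩ : Fin n) (1:ℝ), ?_⟩
    simp [EuclideanSpace.norm_single]
  obtain ⟨z, hzs, hz⟩ := (isCompact_sphere (0 : EuclideanSpace ℝ (Fin n)) 1).exists_isMinOn
    hsphere hcont.continuousOn
  have hznorm : ‖z‖ = 1 := by simpa using hzs
  have hzne : z ≠ 0 := fun h => by simp [h] at hznorm
  have hNz : 0 < N z := (hnonneg z).lt_of_ne (fun h => hzne ((hzero z).1 h.symm))
  have hm : 0 < N z ^ p := Real.rpow_pos_of_pos hNz _
  refine ⟨(N z ^ p) ^ (1/p), Real.rpow_pos_of_pos hm _, fun x => ?_⟩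
  rcases eq_or_ne x 0 with rfl | hx
  · simp [(hzero 0).2 rfl, hnonneg]
  · have hxn : 0 < ‖x‖ := norm_pos_iff.2 hx
    set u := ‖x‖⁻¹ • x with hu
    have hus : u ∈ Metric.sphere (0 : EuclideanSpace ℝ (Fin n)) 1 := by
      simp [hu, norm_smul, abs_of_pos (inv_pos.2 hxn), inv_mul_cancel₀ hxn.ne']
    have hmin : N z ^ p ≤ N u ^ p := hz hus
    have hNu : (N z ^ p) ^ (1/p) ≤ N u := by
      rw [one_div]
      have := Real.rpow_le_rpow hm.le hmin (inv_nonneg.2 hp0.le)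
      rwa [Real.rpow_rpow_inv (hnonneg u) hp0.ne'] at this
    have hxu : x = ‖x‖ • u := by
      rw [hu, smul_smul, mul_inv_cancel₀ hxn.ne', one_smul]
    calc (N z ^ p) ^ (1/p) * ‖x‖ ≤ N u * ‖x‖ :=
          mul_le_mul_of_nonneg_right hNu (norm_nonneg _)
      _ = N x := by
          have hNx : N x = ‖x‖ * N u := by
            conv_lhs => rw [hxu]
            rw [hsmul, abs_of_pos hxn]
          rw [hNx]; ring

section
variable (p : ℝ) (n : ℕ)
  (N : EuclideanSpace ℝ (Fin n) → ℝ)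

-- volume of {y | N (y - x₀) ≤ r}
lemma pnorm_Tvol (hp0 : 0 < p)
    (hnonneg : ∀ x, 0 ≤ N x)
    (hsmul : ∀ (c : ℝ) x, N (c • x) = |c| * N x)
    (x₀ : EuclideanSpace ℝ (Fin n)) (r : ℝ) (hr : 0 < r) :
    volume {y : EuclideanSpace ℝ (Fin n) | N (y - x₀) ≤ r}
      = ENNReal.ofReal (r ^ n) * volume {x : EuclideanSpace ℝ (Fin n) | N x ≤ 1} := by
  have hset : {y : EuclideanSpace ℝ (Fin n) | N (y - x₀) ≤ r}
      = (x₀ + ·) '' (r • {x : EuclideanSpace ℝ (Fin n) | N x ≤ 1}) := by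
    ext y
    simp only [Set.mem_setOf_eq, Set.mem_image]
    constructor
    · intro h
      refine ⟨y - x₀, ?_, by abel⟩
      rw [Set.mem_smul_set_iff_inv_smul_mem₀ hr.ne']
      simp only [Set.mem_setOf_eq, hsmul, abs_of_pos (inv_pos.2 hr)]
      rw [inv_mul_le_iff₀ hr]
      simpa using h
    · rintro ⟨z, hz, rfl⟩
      rw [Set.mem_smul_set_iff_inv_smul_mem₀ hr.ne'] at hz
      simp only [Set.mem_setOf_eq, hsmul, abs_of_pos (inv_pos.2 hr)] at hz
      rw [inv_mul_le_iff₀ hr] at hz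
      simpa using hz
  rw [hset]
  have h1 : (x₀ + ·) '' (r • {x : EuclideanSpace ℝ (Fin n) | N x ≤ 1})
      = x₀ +ᵥ (r • {x : EuclideanSpace ℝ (Fin n) | N x ≤ 1}) := rfl
  rw [h1, measure_vadd, Measure.addHaar_smul]
  simp [finrank_euclideanSpace, abs_of_pos hr]
end

theorem core (p : ℝ) (hp0 : 0 < p) (hp1 : p ≤ 1) (n : ℕ) (hn : 0 < n)
    (N : EuclideanSpace ℝ (Fin n) → ℝ)
    (hnonneg : ∀ x, 0 ≤ N x)
    (hzero : ∀ x, N x = 0 ↔ x = 0)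
    (hsmul : ∀ (c : ℝ) x, N (c • x) = |c| * N x)
    (hptri : ∀ x y, N (x + y) ^ p ≤ N x ^ p + N y ^ p)
    (k : ℕ) (hk : 1 ≤ k) :
    (2 : ℝ) ^ ((1 - (k : ℝ)) / (n : ℝ)) ≤
      sInf {ε : ℝ | 0 < ε ∧ ∃ c : Fin (2 ^ (k - 1)) → EuclideanSpace ℝ (Fin n),
        ∀ x, N x ≤ 1 → ∃ i, N (x - c i) ≤ ε} ∧
    sInf {ε : ℝ | 0 < ε ∧ ∃ c : Fin (2 ^ (k - 1)) → EuclideanSpace ℝ (Fin n),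
        ∀ x, N x ≤ 1 → ∃ i, N (x - c i) ≤ ε} ≤
      (4 : ℝ) ^ (1 / p) * (2 : ℝ) ^ ((1 - (k : ℝ)) / (n : ℝ)) := by
  classical
  set S := {ε : ℝ | 0 < ε ∧ ∃ c : Fin (2 ^ (k - 1)) → EuclideanSpace ℝ (Fin n),
        ∀ x, N x ≤ 1 → ∃ i, N (x - c i) ≤ ε} with hS
  have hN0 : N 0 = 0 := (hzero 0).2 rfl
  have hNneg : ∀ x, N (-x) = N x := fun x => by
    simpa using hsmul (-1) x
  have hNsub : ∀ a b, N (a - b) = N (b - a) := fun a b => by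
    rw [show a - b = -(b - a) by abel, hNneg]
  -- basic iff
  have hiff : ∀ (x : EuclideanSpace ℝ (Fin n)) (r : ℝ), 0 ≤ r →
      (N x ≤ r ↔ N x ^ p ≤ r ^ p) :=
    fun x r hr => (Real.rpow_le_rpow_iff (hnonneg x) hr hp0).symm
  obtain ⟨K, hK, hup⟩ := pnorm_upper p hp0 n N hnonneg hN0 hsmul hptri
  have hcont := pnorm_cont p hp0 n N hnonneg hNneg hptri K hK hup
  obtain ⟨c₀, hc₀, hlow⟩ := pnorm_lower p hp0 n hn N hnonneg hzero hsmul hcont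
  -- the unit ball
  set B := {x : EuclideanSpace ℝ (Fin n) | N x ≤ 1} with hB
  have hBclosed : IsClosed B := by
    have : B = (fun x => N x ^ p) ⁻¹' Set.Iic 1 := by
      ext x
      simp only [hB, Set.mem_setOf_eq, Set.mem_preimage, Set.mem_Iic]
      rw [hiff x 1 zero_le_one, Real.one_rpow]
    rw [this]
    exact isClosed_Iic.preimage hcont
  have hBbdd : Bornology.IsBounded B := by
    apply (Metric.isBounded_closedBall (x := (0 : EuclideanSpace ℝ (Fin n))) (r := 1 / c₀)).subset
    intro x hx
    simp only [Metric.mem_closedBall, dist_zero_right]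
    rw [le_div_iff₀ hc₀]
    calc ‖x‖ * c₀ = c₀ * ‖x‖ := mul_comm _ _
      _ ≤ N x := hlow x
      _ ≤ 1 := hx
  have hBcompact : IsCompact B := Metric.isCompact_of_isClosed_isBounded hBclosed hBbdd
  set v := volume B with hv
  have hvtop : v < ⊤ := hBcompact.measure_lt_top
  have hv0 : 0 < v := by
    have hr₀ : (0:ℝ) < (1 / K) ^ (1/p) := Real.rpow_pos_of_pos (by positivity) _
    have hsub : Metric.ball (0 : EuclideanSpace ℝ (Fin n)) ((1 / K) ^ (1/p)) ⊆ B := by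
      intro x hx
      simp only [Metric.mem_ball, dist_zero_right] at hx
      rw [hB, Set.mem_setOf_eq, hiff x 1 zero_le_one, Real.one_rpow]
      calc N x ^ p ≤ K * ‖x‖ ^ p := hup x
        _ ≤ K * ((1 / K) ^ (1/p)) ^ p := by
            apply mul_le_mul_of_nonneg_left _ hK.le
            exact Real.rpow_le_rpow (norm_nonneg _) hx.le hp0.le
        _ = 1 := by
            rw [one_div p, Real.rpow_inv_rpow (by positivity) hp0.ne']
            field_simp
    exact lt_of_lt_of_le (Metric.measure_ball_pos _ _ hr₀) (measure_mono hsub)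
  have hTvol := pnorm_Tvol p n N hp0 hnonneg hsmul
  have hTmeas : ∀ (x₀ : EuclideanSpace ℝ (Fin n)) (r : ℝ), 0 ≤ r →
      MeasurableSet {y : EuclideanSpace ℝ (Fin n) | N (y - x₀) ≤ r} := by
    intro x₀ r hr
    have : {y : EuclideanSpace ℝ (Fin n) | N (y - x₀) ≤ r}
        = (fun y => N (y - x₀) ^ p) ⁻¹' Set.Iic (r ^ p) := by
      ext y
      simp only [Set.mem_setOf_eq, Set.mem_preimage, Set.mem_Iic]
      exact hiff _ r hr
    rw [this]
    exact (isClosed_Iic.preimage (hcont.comp (continuous_id.sub continuous_const))).measurableSet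
  -- lower bound
  set L := (2:ℝ) ^ ((1 - (k:ℝ)) / (n:ℝ)) with hLdef
  have hL0 : 0 < L := Real.rpow_pos_of_pos two_pos _
  have hMcast : ((2 ^ (k-1) : ℕ) : ℝ) = (2:ℝ) ^ (((k:ℝ) - 1)) := by
    push_cast
    rw [← Real.rpow_natCast 2 (k-1), Nat.cast_sub hk, Nat.cast_one]
  have hLpow : L ^ n = ((2 ^ (k-1) : ℕ) : ℝ)⁻¹ := by
    rw [← Real.rpow_natCast L n, hLdef, ← Real.rpow_mul (by norm_num),
      div_mul_cancel₀ _ (Nat.cast_ne_zero.2 hn.ne'), hMcast,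
      ← Real.rpow_neg (by norm_num : (0:ℝ) ≤ 2)]
    congr 1
    ring
  have hlb : ∀ ε ∈ S, L ≤ ε := by
    intro ε hε
    obtain ⟨hεpos, c, hc⟩ := hε
    have hcover : B ⊆ ⋃ i, {y | N (y - c i) ≤ ε} := by
      intro x hx
      obtain ⟨i, hi⟩ := hc x hx
      exact Set.mem_iUnion.2 ⟨i, hi⟩
    have hvle : v ≤ ((2^(k-1) : ℕ) : ENNReal) * ENNReal.ofReal (ε ^ n) * v := by
      calc v ≤ volume (⋃ i, {y | N (y - c i) ≤ ε}) := measure_mono hcover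
        _ ≤ ∑ _i : Fin (2^(k-1)), ENNReal.ofReal (ε ^ n) * v := by
            refine (measure_iUnion_fintype_le _ _).trans ?_
            exact Finset.sum_le_sum fun i _ => le_of_eq (hTvol (c i) ε hεpos)
        _ = ((2^(k-1) : ℕ) : ENNReal) * ENNReal.ofReal (ε^n) * v := by
            rw [Finset.sum_const, Finset.card_univ, Fintype.card_fin, nsmul_eq_mul, mul_assoc]
    have h1 : (1:ENNReal) ≤ ((2^(k-1):ℕ) : ENNReal) * ENNReal.ofReal (ε^n) := by
      rw [← ENNReal.mul_le_mul_iff_left hv0.ne' hvtop.ne, one_mul]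
      exact hvle
    have h2 : (1:ℝ) ≤ ((2^(k-1):ℕ):ℝ) * ε^n := by
      rw [← ENNReal.ofReal_natCast, ← ENNReal.ofReal_mul (by positivity)] at h1
      exact ENNReal.one_le_ofReal.1 h1
    have hM : (0:ℝ) < ((2^(k-1):ℕ):ℝ) := by positivity
    have h3 : L ^ n ≤ ε ^ n := by
      rw [hLpow, inv_eq_one_div, div_le_iff₀ hM]
      linarith
    exact le_of_pow_le_pow_left₀ hn.ne' hεpos.le h3
  have hSne : S.Nonempty := by
    refine ⟨1, one_pos, fun _ => 0, fun x hx => ?_⟩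
    have : (0 : ℕ) < 2 ^ (k-1) := Nat.two_pow_pos _
    exact ⟨⟨0, this⟩, by simpa using hx⟩
  have hbdd : BddBelow S := ⟨0, fun x hx => hx.1.le⟩
  constructor
  · exact le_csInf hSne hlb
  · -- upper bound
    set q := (4:ℝ) ^ (1/p) * L with hqdef
    have hq : 0 < q := mul_pos (Real.rpow_pos_of_pos (by norm_num) _) hL0
    have hpow_pos : (0:ℕ) < 2^(k-1) := Nat.two_pow_pos _
    have hmem : q ∈ S := by
      rcases le_or_gt 1 q with hge | hlt
      · refine ⟨hq, fun _ => 0, fun x hx => ?_⟩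
        exact ⟨⟨0, hpow_pos⟩, by simpa using hx.trans hge⟩
      · have hqp0 : 0 < q ^ p := Real.rpow_pos_of_pos hq _
        set r := (q^p/2) ^ (1/p) with hrdef
        set s := (1 + q^p/2) ^ (1/p) with hsdef
        have hr0 : 0 < r := Real.rpow_pos_of_pos (by positivity) _
        have hs0 : 0 < s := Real.rpow_pos_of_pos (by positivity) _
        have hrp : r ^ p = q^p/2 := by
          rw [hrdef, one_div, Real.rpow_inv_rpow (by positivity) hp0.ne']
        have hsp : s ^ p = 1 + q^p/2 := by
          rw [hsdef, one_div, Real.rpow_inv_rpow (by positivity) hp0.ne']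
        have hcard : ∀ F : Finset (EuclideanSpace ℝ (Fin n)), ↑F ⊆ B →
            (∀ a ∈ F, ∀ b ∈ F, a ≠ b → q < N (a - b)) → F.card ≤ 2^(k-1) := by
          intro F hFB hFsep
          have hdisj : (F : Set (EuclideanSpace ℝ (Fin n))).PairwiseDisjoint
              (fun a => {y : EuclideanSpace ℝ (Fin n) | N (y - a) ≤ r}) := by
            intro a ha b hb hab
            refine Set.disjoint_left.2 fun y hya hyb => ?_
            simp only [Set.mem_setOf_eq] at hya hyb
            have h1 : N (a - b) ^ p ≤ N (y - a) ^ p + N (y - b) ^ p := by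
              have h := hptri (a - y) (y - b)
              rw [show a - y + (y - b) = a - b by abel, hNsub a y] at h
              exact h
            have h2 : N (y - a) ^ p ≤ r ^ p := (hiff _ r hr0.le).1 hya
            have h3 : N (y - b) ^ p ≤ r ^ p := (hiff _ r hr0.le).1 hyb
            have h4 : q ^ p < N (a - b) ^ p :=
              Real.rpow_lt_rpow hq.le (hFsep a (by exact_mod_cast ha) b (by exact_mod_cast hb) hab) hp0
            rw [hrp] at h2 h3
            linarith
          have hunion : (⋃ a ∈ F, {y : EuclideanSpace ℝ (Fin n) | N (y - a) ≤ r})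
              ⊆ {y : EuclideanSpace ℝ (Fin n) | N (y - (0:EuclideanSpace ℝ (Fin n))) ≤ s} := by
            intro y hy
            obtain ⟨a, haF, hya⟩ := Set.mem_iUnion₂.1 hy
            simp only [Set.mem_setOf_eq] at hya ⊢
            rw [sub_zero]
            have hNa : N a ^ p ≤ 1 := by
              have := hFB haF
              rw [hB, Set.mem_setOf_eq, hiff a 1 zero_le_one, Real.one_rpow] at this
              exact this
            have h1 : N y ^ p ≤ N a ^ p + N (y - a) ^ p := by
              have h := hptri a (y - a)
              rw [show a + (y - a) = y by abel] at h
              exact h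
            rw [hiff y s hs0.le, hsp]
            have h2 : N (y - a) ^ p ≤ r ^ p := (hiff _ r hr0.le).1 hya
            rw [hrp] at h2
            linarith
          have hμ : (F.card : ENNReal) * (ENNReal.ofReal (r^n) * v)
              ≤ ENNReal.ofReal (s^n) * v := by
            calc (F.card : ENNReal) * (ENNReal.ofReal (r^n) * v)
                = ∑ a ∈ F, volume {y : EuclideanSpace ℝ (Fin n) | N (y - a) ≤ r} := by
                  rw [Finset.sum_congr rfl (fun a _ => hTvol a r hr0), Finset.sum_const,
                    nsmul_eq_mul]
              _ = volume (⋃ a ∈ F, {y : EuclideanSpace ℝ (Fin n) | N (y - a) ≤ r}) :=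
                  (measure_biUnion_finset hdisj (fun a _ => hTmeas a r hr0.le)).symm
              _ ≤ volume {y : EuclideanSpace ℝ (Fin n) | N (y - (0:EuclideanSpace ℝ (Fin n))) ≤ s} :=
                  measure_mono hunion
              _ = ENNReal.ofReal (s^n) * v := hTvol 0 s hs0
          have hreal : (F.card : ℝ) * r^n ≤ s^n := by
            rw [← mul_assoc] at hμ
            have h5 := (ENNReal.mul_le_mul_iff_left hv0.ne' hvtop.ne).1 hμ
            rw [← ENNReal.ofReal_natCast, ← ENNReal.ofReal_mul (by positivity)] at h5
            exact (ENNReal.ofReal_le_ofReal_iff (by positivity)).1 h5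
          have hqp' : (s/r) ^ p = 2/q^p + 1 := by
            rw [Real.div_rpow hs0.le hr0.le, hsp, hrp]
            field_simp
          set t := (2:ℝ) ^ (((k:ℝ)-1) * p / (n:ℝ)) with htdef
          have ht0 : 0 < t := Real.rpow_pos_of_pos (by norm_num) _
          have hqpt : q ^ p = 4 / t := by
            rw [hqdef, Real.mul_rpow (by positivity) hL0.le, one_div,
              Real.rpow_inv_rpow (by norm_num) hp0.ne', hLdef, htdef,
              ← Real.rpow_mul (by norm_num), div_eq_mul_inv (4:ℝ),
              ← Real.rpow_neg (by norm_num : (0:ℝ) ≤ 2)]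
            congr 1
            field_simp
            ring
          have ht4 : 4 < t := by
            have h1 : q ^ p < 1 := Real.rpow_lt_one hq.le hlt hp0
            rw [hqpt, div_lt_one ht0] at h1
            exact h1
          have hq_le : (s/r)^p ≤ t := by
            rw [hqp', hqpt]
            have h6 : 2/((4:ℝ)/t) = t/2 := by
              rw [div_div_eq_mul_div]
              ring
            rw [h6]
            linarith
          have hsr : s/r ≤ t ^ (1/p) := by
            rw [← Real.rpow_rpow_inv (div_nonneg hs0.le hr0.le) hp0.ne', ← one_div]
            exact Real.rpow_le_rpow (Real.rpow_nonneg (div_nonneg hs0.le hr0.le) _)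
              hq_le (by positivity)
          have htp : t ^ (1/p) = (2:ℝ) ^ (((k:ℝ)-1)/(n:ℝ)) := by
            rw [htdef, ← Real.rpow_mul (by norm_num)]
            congr 1
            field_simp
          have hfin : (s/r)^n ≤ ((2^(k-1):ℕ):ℝ) := by
            rw [hMcast]
            calc (s/r)^n ≤ (t^(1/p))^n :=
                  pow_le_pow_left₀ (div_nonneg hs0.le hr0.le) hsr n
              _ = 2 ^ ((k:ℝ)-1) := by
                  rw [htp, ← Real.rpow_natCast ((2:ℝ) ^ (((k:ℝ)-1)/(n:ℝ))) n,
                    ← Real.rpow_mul (by norm_num),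
                    div_mul_cancel₀ _ (Nat.cast_ne_zero.2 hn.ne' : ((n:ℕ):ℝ) ≠ 0)]
          have hcardR : (F.card : ℝ) ≤ ((2^(k-1):ℕ):ℝ) := by
            have hrn : 0 < r^n := pow_pos hr0 n
            calc (F.card:ℝ) ≤ s^n / r^n := (le_div_iff₀ hrn).2 hreal
              _ = (s/r)^n := (div_pow s r n).symm
              _ ≤ _ := hfin
          exact_mod_cast hcardR
        set Q := {m : ℕ | ∃ F : Finset (EuclideanSpace ℝ (Fin n)), ↑F ⊆ B ∧
            (∀ a ∈ F, ∀ b ∈ F, a ≠ b → q < N (a - b)) ∧ F.card = m} with hQ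
        have hQne : Q.Nonempty := ⟨0, ∅, by simp, by simp, rfl⟩
        have hQbdd : BddAbove Q := by
          refine ⟨2^(k-1), fun m hm => ?_⟩
          obtain ⟨F, h1, h2, h3⟩ := hm
          exact h3 ▸ hcard F h1 h2
        obtain ⟨F, hFB, hFsep, hFcard⟩ := Nat.sSup_mem hQne hQbdd
        have hcover : ∀ x ∈ B, ∃ a ∈ F, N (x - a) ≤ q := by
          intro x hx
          by_contra hcon
          push_neg at hcon
          have hxF : x ∉ F := fun hxF => by
            have h := hcon x hxF
            rw [sub_self, hN0] at h
            exact absurd h (not_lt.2 hq.le)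
          have hFB' : ↑(insert x F) ⊆ B := by
            rw [Finset.coe_insert]
            exact Set.insert_subset hx hFB
          have hsep' : ∀ a ∈ insert x F, ∀ b ∈ insert x F, a ≠ b → q < N (a - b) := by
            intro a ha b hb hab
            rcases Finset.mem_insert.1 ha with rfl | ha' <;>
              rcases Finset.mem_insert.1 hb with rfl | hb'
            · exact absurd rfl hab
            · exact hcon b hb'
            · rw [hNsub]
              exact hcon a ha'
            · exact hFsep a ha' b hb' hab
          have hmemQ : F.card + 1 ∈ Q :=
            ⟨insert x F, hFB', hsep', by rw [Finset.card_insert_of_notMem hxF]⟩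
          have := le_csSup hQbdd hmemQ
          omega
        have hFle : F.card ≤ 2^(k-1) := hcard F hFB hFsep
        have hlen : F.toList.length = F.card := Finset.length_toList F
        refine ⟨hq, fun i => F.toList.getD (i:ℕ) 0, fun x hx => ?_⟩
        obtain ⟨a, haF, hax⟩ := hcover x hx
        obtain ⟨j, hj⟩ := List.mem_iff_get.1 (Finset.mem_toList.2 haF)
        have hj1 : (j:ℕ) < F.card := by rw [← hlen]; exact j.isLt
        have hjlt : (j:ℕ) < 2^(k-1) := lt_of_lt_of_le hj1 hFle
        refine ⟨⟨(j:ℕ), hjlt⟩, ?_⟩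
        show N (x - F.toList.getD ((j:ℕ)) 0) ≤ q
        rw [List.getD_eq_get _ _ j]
        have heq : F.toList.get ⟨(j:ℕ), j.isLt⟩ = a := by
          rw [← hj]
        rw [heq]
        exact hax
    exact csInf_le hbdd hmem

/-- Two-sided estimates for the entropy numbers of the identity map of an
`n`-dimensional `p`-Banach space: `2^{(1-k)/n} ≤ e_k(I) ≤ 4^{1/p} 2^{(1-k)/n}`. -/
theorem stmt_3 (p : ℝ) (hp0 : 0 < p) (hp1 : p ≤ 1)
    (X : Type*) [AddCommGroup X] [Module ℝ X]
    (n : ℕ) (hn : 0 < n) (hdim : Module.finrank ℝ X = n) [FiniteDimensional ℝ X]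
    (nrm : X → ℝ)
    (hnonneg : ∀ x, 0 ≤ nrm x)
    (hzero : ∀ x, nrm x = 0 ↔ x = 0)
    (hsmul : ∀ (c : ℝ) (x : X), nrm (c • x) = |c| * nrm x)
    (hptri : ∀ x y : X, nrm (x + y) ^ p ≤ nrm x ^ p + nrm y ^ p)
    (k : ℕ) (hk : 1 ≤ k)
    (ek : ℝ)
    (hek : ek = sInf {ε : ℝ | 0 < ε ∧ ∃ c : Fin (2 ^ (k - 1)) → X,
      ∀ x : X, nrm x ≤ 1 → ∃ i, nrm (x - c i) ≤ ε}) :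
    (2 : ℝ) ^ ((1 - (k : ℝ)) / (n : ℝ)) ≤ ek ∧
      ek ≤ (4 : ℝ) ^ (1 / p) * (2 : ℝ) ^ ((1 - (k : ℝ)) / (n : ℝ)) := by
  have e : X ≃ₗ[ℝ] EuclideanSpace ℝ (Fin n) :=
    LinearEquiv.ofFinrankEq X (EuclideanSpace ℝ (Fin n))
      (by simp [hdim, finrank_euclideanSpace])
  set N : EuclideanSpace ℝ (Fin n) → ℝ := fun x => nrm (e.symm x) with hN
  have hseteq : {ε : ℝ | 0 < ε ∧ ∃ c : Fin (2 ^ (k - 1)) → X,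
      ∀ x : X, nrm x ≤ 1 → ∃ i, nrm (x - c i) ≤ ε}
      = {ε : ℝ | 0 < ε ∧ ∃ c : Fin (2 ^ (k - 1)) → EuclideanSpace ℝ (Fin n),
      ∀ x, N x ≤ 1 → ∃ i, N (x - c i) ≤ ε} := by
    ext ε
    simp only [Set.mem_setOf_eq, hN]
    constructor
    · rintro ⟨hε, c, hc⟩
      refine ⟨hε, fun i => e (c i), fun x hx => ?_⟩
      obtain ⟨i, hi⟩ := hc (e.symm x) hx
      refine ⟨i, ?_⟩
      rw [map_sub, e.symm_apply_apply]
      exact hi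
    · rintro ⟨hε, c, hc⟩
      refine ⟨hε, fun i => e.symm (c i), fun x hx => ?_⟩
      obtain ⟨i, hi⟩ := hc (e x) (by rwa [e.symm_apply_apply])
      refine ⟨i, ?_⟩
      rwa [map_sub, e.symm_apply_apply] at hi
  rw [hek, hseteq]
  refine core p hp0 hp1 n hn N (fun x => hnonneg _) (fun x => ?_) (fun c x => ?_)
    (fun x y => ?_) k hk
  · rw [hN]
    simp only []
    rw [hzero]
    exact ⟨fun h => by simpa using congrArg e h, fun h => by rw [h]; simp⟩
  · show nrm (e.symm (c • x)) = |c| * nrm (e.symm x)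
    rw [LinearEquiv.map_smul, hsmul]
  · show nrm (e.symm (x + y)) ^ p ≤ nrm (e.symm x) ^ p + nrm (e.symm y) ^ p
    rw [map_add]
    exact hptri _ _
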